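/- Laplace transform of the divided difference of the exponential: for every integer q ≥ 0, every tuple (x_0, …, x_q) of real numbers, every real α, and every real s satisfying s > α x_j for all j = 0, …, q, the function t ↦ e^{-st} · e^{αt[x_0, …, x_q]} is integrable on (0, ∞) and ∫_0^∞ e^{-st} · e^{αt[x_0, …, x_q]} dt = α^q / Π_{j=0}^{q} (s − α x_j). -/

import Mathlib

open scoped BigOperators

/-- Complete homogeneous symmetric polynomial of degree `m` in the entries of the list `l`:
`h_m(x_0, …, x_q) = Σ_{k_0+⋯+k_q = m} x_0^{k_0}⋯x_q^{k_q}` (with `h_0 = 1`). -/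
noncomputable def hsymm (l : List ℝ) (m : ℕ) : ℝ :=
  ∑ k ∈ Finset.Nat.antidiagonalTuple l.length m, ∏ i : Fin l.length, l.get i ^ k i

/-- Divided difference of the exponential `e^{t[x_0, …, x_q]}` over the tuple given by the
list `l` (of length `q+1`), defined by its (absolutely convergent) series
`Σ_{m=0}^∞ (t^{q+m}/(q+m)!) · h_m(x_0, …, x_q)`; by convention it is `0` on the empty tuple. -/
noncomputable def dde (t : ℝ) (l : List ℝ) : ℝ :=
  if l.length = 0 then 0
  else ∑' m : ℕ, t ^ (l.length - 1 + m) / (Nat.factorial (l.length - 1 + m)) * hsymm l m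

/-- The sub-tuple `[x_a, …, x_b]` of the sequence `x`, as a list (empty if `b < a`). -/
def seg (x : ℕ → ℝ) (a b : ℕ) : List ℝ :=
  (List.range (b + 1 - a)).map (fun i => x (a + i))

open MeasureTheory

lemma hsymm_cons (y : ℝ) (l : List ℝ) (m : ℕ) :
    hsymm (y :: l) m = ∑ p ∈ Finset.HasAntidiagonal.antidiagonal m, y ^ p.1 * hsymm l p.2 := by
  classical
  unfold hsymm
  simp only [List.length_cons]
  simp only [Finset.mul_sum]
  rw [Finset.sum_sigma']
  refine Finset.sum_nbij' (i := fun (k : Fin (l.length + 1) → ℕ) =>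
      (⟨(k 0, m - k 0), Fin.tail k⟩ : Σ _ : ℕ × ℕ, (Fin l.length → ℕ)))
    (j := fun pk => (Fin.cons pk.1.1 pk.2 : Fin (l.length + 1) → ℕ)) ?_ ?_ ?_ ?_ ?_
  · intro k hk
    simp only [Finset.Nat.mem_antidiagonalTuple] at hk
    have h0 : k 0 ≤ m := by
      rw [← hk, Fin.sum_univ_succ]; exact Nat.le_add_right _ _
    have h2 : ∑ i, Fin.tail k i = m - k 0 := by
      rw [← hk, Fin.sum_univ_succ]; simp [Fin.tail]
    simp only [Finset.mem_sigma, Finset.HasAntidiagonal.mem_antidiagonal, Finset.Nat.mem_antidiagonalTuple]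
    exact ⟨by omega, h2⟩
  · rintro ⟨⟨a, b⟩, k⟩ h
    simp only [Finset.mem_sigma, Finset.HasAntidiagonal.mem_antidiagonal,
      Finset.Nat.mem_antidiagonalTuple] at h
    simp only [Finset.Nat.mem_antidiagonalTuple, Fin.sum_cons, h.2, h.1]
  · intro k hk
    exact Fin.cons_self_tail k
  · rintro ⟨⟨a, b⟩, k⟩ h
    simp only [Finset.mem_sigma, Finset.HasAntidiagonal.mem_antidiagonal,
      Finset.Nat.mem_antidiagonalTuple] at h
    simp only [Fin.cons_zero, Fin.tail_cons, Sigma.mk.inj_iff, Prod.mk.injEq, heq_eq_eq,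
      true_and, and_true]
    omega
  · intro k hk
    simp only [Fin.prod_univ_succ, Fin.cons_zero, Fin.cons_succ]
    rfl

lemma hsymm_zero (l : List ℝ) : hsymm l 0 = 1 := by
  unfold hsymm
  rw [Finset.Nat.antidiagonalTuple_zero_right]
  simp

lemma hsymm_singleton (y : ℝ) (m : ℕ) : hsymm [y] m = y ^ m := by
  unfold hsymm
  simp [Finset.Nat.antidiagonalTuple_one]

lemma abs_hsymm_le (l : List ℝ) (m : ℕ) :
    |hsymm l m| ≤ ((l.map (fun z => |z|)).sum) ^ m := by
  induction l generalizing m with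
  | nil =>
    cases m with
    | zero => simp [hsymm_zero]
    | succ m =>
      have h0 : hsymm [] (m + 1) = 0 := by
        unfold hsymm
        simp
      simp [h0]
  | cons y l ih =>
    have hS0 : 0 ≤ (l.map (fun z => |z|)).sum :=
      List.sum_nonneg (by simp only [List.mem_map]; rintro a ⟨z, _, rfl⟩; positivity)
    calc |hsymm (y :: l) m|
        ≤ ∑ p ∈ Finset.HasAntidiagonal.antidiagonal m, |y| ^ p.1 * ((l.map (fun z => |z|)).sum) ^ p.2 := by
          rw [hsymm_cons]
          refine (Finset.abs_sum_le_sum_abs _ _).trans (Finset.sum_le_sum fun p _ => ?_)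
          rw [abs_mul, abs_pow]
          exact mul_le_mul_of_nonneg_left (ih p.2) (by positivity)
      _ ≤ (|y| + (l.map (fun z => |z|)).sum) ^ m := by
          rw [add_pow, Finset.Nat.sum_antidiagonal_eq_sum_range_succ_mk]
          refine Finset.sum_le_sum fun k hk => ?_
          have hk' : k ≤ m := by
            simpa using Nat.lt_succ_iff.mp (Finset.mem_range.mp hk)
          refine le_mul_of_one_le_right (by positivity) ?_
          exact_mod_cast Nat.one_le_iff_ne_zero.mpr (Nat.choose_pos hk').ne'
      _ = (((y :: l).map (fun z => |z|)).sum) ^ m := by simp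

lemma summable_aux {S : ℝ} (hS : 0 ≤ S) (c : ℝ) (n : ℕ) :
    Summable (fun m => |c| ^ (n + m) / (Nat.factorial (n + m)) * S ^ m) := by
  refine Summable.of_nonneg_of_le (fun m => by positivity) (fun m => ?_)
    ((Real.summable_pow_div_factorial (|c| * S)).mul_left (|c| ^ n / (Nat.factorial n)))
  have h1 : ((Nat.factorial n : ℝ) * (Nat.factorial m : ℝ)) ≤ (Nat.factorial (n + m) : ℝ) := by
    exact_mod_cast Nat.le_of_dvd (Nat.factorial_pos _)
      (Nat.factorial_mul_factorial_dvd_factorial_add n m)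
  have h2 : ((Nat.factorial (n + m) : ℝ))⁻¹ ≤ ((Nat.factorial n : ℝ) * (Nat.factorial m : ℝ))⁻¹ := by
    apply inv_anti₀ (by positivity) h1
  calc |c| ^ (n + m) / (Nat.factorial (n + m)) * S ^ m
      = (|c| ^ n * (|c| * S) ^ m) * ((Nat.factorial (n + m) : ℝ))⁻¹ := by
        rw [pow_add, mul_pow]; ring
    _ ≤ (|c| ^ n * (|c| * S) ^ m) * ((Nat.factorial n : ℝ) * (Nat.factorial m : ℝ))⁻¹ := by
        apply mul_le_mul_of_nonneg_left h2 (by positivity)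
    _ = |c| ^ n / (Nat.factorial n) * ((|c| * S) ^ m / (Nat.factorial m)) := by
        rw [mul_inv]; ring

lemma sumabs_nonneg (l : List ℝ) : 0 ≤ (l.map (fun z => |z|)).sum :=
  List.sum_nonneg (by simp only [List.mem_map]; rintro a ⟨z, _, rfl⟩; positivity)

lemma summable_dde_terms (l : List ℝ) (t : ℝ) (n : ℕ) :
    Summable (fun m => t ^ (n + m) / (Nat.factorial (n + m)) * hsymm l m) := by
  refine Summable.of_norm_bounded (summable_aux (sumabs_nonneg l) t n) fun m => ?_
  rw [Real.norm_eq_abs, abs_mul, abs_div, abs_pow, Nat.abs_cast]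
  exact mul_le_mul_of_nonneg_left (abs_hsymm_le l m) (by positivity)

lemma hsymm_cons_succ (y : ℝ) (l : List ℝ) (m : ℕ) :
    hsymm (y :: l) (m + 1) = hsymm l (m + 1) + y * hsymm (y :: l) m := by
  rw [hsymm_cons, Finset.Nat.antidiagonal_succ, Finset.sum_cons, Finset.sum_map, pow_zero, one_mul]
  congr 1
  rw [hsymm_cons, Finset.mul_sum]
  refine Finset.sum_congr rfl fun p _ => ?_
  simp only [Function.Embedding.coe_prodMap, Function.Embedding.coeFn_mk,
    Function.Embedding.refl_apply, Prod.map_fst, Prod.map_snd]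
  rw [pow_succ]
  ring

lemma dde_cons (y : ℝ) (l : List ℝ) (t : ℝ) :
    dde t (y :: l) = ∑' m, t ^ (l.length + m) / (Nat.factorial (l.length + m)) * hsymm (y :: l) m := by
  simp [dde]

lemma dde_singleton (y t : ℝ) : dde t [y] = Real.exp (t * y) := by
  rw [dde_cons, Real.exp_eq_exp_ℝ, NormedSpace.exp_eq_tsum_div]
  refine tsum_congr fun m => ?_
  rw [hsymm_singleton, mul_pow]
  simp only [List.length_nil, Nat.zero_add]
  ring

set_option maxHeartbeats 1000000 in
lemma hasDerivAt_dde_cons (y : ℝ) {l : List ℝ} (hl : l ≠ []) (t : ℝ) :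
    HasDerivAt (fun t => dde t (y :: l)) (y * dde t (y :: l) + dde t l) t := by
  obtain ⟨j, hj⟩ : ∃ j, l.length = j + 1 := by
    cases l with
    | nil => exact absurd rfl hl
    | cons a l => exact ⟨l.length, rfl⟩
  set S := (((y :: l).map fun z => |z|).sum) with hSdef
  have hS0 : 0 ≤ S := sumabs_nonneg _
  set R := |t| + 1 with hRdef
  have hR0 : (0:ℝ) < R := by positivity
  have htR : t ∈ Set.Ioo (-R) R :=
    ⟨by simp only [hRdef]; linarith [neg_abs_le t], by simp only [hRdef]; linarith [le_abs_self t]⟩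
  have key : HasDerivAt
      (fun z => ∑' m, z ^ (l.length + m) / (Nat.factorial (l.length + m)) * hsymm (y :: l) m)
      (∑' m, t ^ (j + m) / (Nat.factorial (j + m)) * hsymm (y :: l) m) t := by
    refine hasDerivAt_tsum_of_isPreconnected
      (u := fun m => R ^ (j + m) / (Nat.factorial (j + m)) * S ^ m)
      (g' := fun m z => z ^ (j + m) / (Nat.factorial (j + m)) * hsymm (y :: l) m)
      (t := Set.Ioo (-R) R) (y₀ := t)
      ?_ isOpen_Ioo isPreconnected_Ioo ?_ ?_ htR ?_ htR
    · have := summable_aux hS0 R j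
      rwa [abs_of_pos hR0] at this
    · intro m z _
      have h1 := (((hasDerivAt_pow (l.length + m) z).div_const
        ((Nat.factorial (l.length + m) : ℝ))).mul_const (hsymm (y :: l) m))
      refine h1.congr_deriv ?_
      rw [hj]
      have e1 : j + 1 + m - 1 = j + m := by omega
      have e2 : j + 1 + m = (j + m) + 1 := by omega
      rw [e1, e2, Nat.factorial_succ]
      have hfac : ((Nat.factorial (j + m) : ℝ)) ≠ 0 := by
        exact_mod_cast (Nat.factorial_pos _).ne'
      push_cast
      field_simp
    · intro m z hz
      rw [Real.norm_eq_abs, abs_mul, abs_div, abs_pow, Nat.abs_cast]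
      have hzR : |z| ≤ R := le_of_lt (abs_lt.mpr ⟨hz.1, hz.2⟩)
      have h2 : |hsymm (y :: l) m| ≤ S ^ m := abs_hsymm_le _ m
      have hc : (0:ℝ) < (Nat.factorial (j + m) : ℝ) := by
        exact_mod_cast Nat.factorial_pos _
      refine mul_le_mul ((div_le_div_iff_of_pos_right hc).mpr ?_) h2 (abs_nonneg _) (by positivity)
      exact pow_le_pow_left₀ (abs_nonneg z) hzR _
    · exact summable_dde_terms (y :: l) t l.length
  have hfun : (fun z => dde z (y :: l)) =
      fun z => ∑' m, z ^ (l.length + m) / (Nat.factorial (l.length + m)) * hsymm (y :: l) m :=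
    funext fun z => dde_cons y l z
  rw [hfun]
  have hddel : dde t l = ∑' m, t ^ (j + m) / (Nat.factorial (j + m)) * hsymm l m := by
    simp [dde, hj]
  have hsum1 : Summable (fun m => t ^ (j + m) / (Nat.factorial (j + m)) * hsymm (y :: l) m) :=
    summable_dde_terms _ t j
  have hsuml : Summable (fun m => t ^ (j + m) / (Nat.factorial (j + m)) * hsymm l m) :=
    summable_dde_terms _ t j
  have hsuml1 : Summable (fun m => t ^ (j + (m + 1)) / (Nat.factorial (j + (m + 1))) * hsymm l (m + 1)) :=
    (summable_nat_add_iff 1).mpr hsuml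
  have eterm : ∀ m : ℕ, t ^ (j + (m + 1)) / (Nat.factorial (j + (m + 1))) * hsymm (y :: l) (m + 1)
      = t ^ (j + (m + 1)) / (Nat.factorial (j + (m + 1))) * hsymm l (m + 1)
        + y * (t ^ (l.length + m) / (Nat.factorial (l.length + m)) * hsymm (y :: l) m) := by
    intro m
    rw [hsymm_cons_succ, hj]
    have e : j + 1 + m = j + (m + 1) := by omega
    rw [e]
    ring
  have main : (∑' m, t ^ (j + m) / (Nat.factorial (j + m)) * hsymm (y :: l) m)
      = y * dde t (y :: l) + dde t l := by
    rw [Summable.tsum_eq_zero_add hsum1]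
    have h1 : (∑' m, t ^ (j + (m + 1)) / (Nat.factorial (j + (m + 1))) * hsymm (y :: l) (m + 1))
        = (∑' m, t ^ (j + (m + 1)) / (Nat.factorial (j + (m + 1))) * hsymm l (m + 1))
          + y * dde t (y :: l) := by
      rw [tsum_congr eterm,
        Summable.tsum_add hsuml1 (Summable.mul_left y (summable_dde_terms (y :: l) t l.length)),
        tsum_mul_left, ← dde_cons]
    rw [h1]
    have h2 : dde t l = t ^ (j + 0) / (Nat.factorial (j + 0)) * hsymm l 0
        + ∑' m, t ^ (j + (m + 1)) / (Nat.factorial (j + (m + 1))) * hsymm l (m + 1) := by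
      rw [hddel, Summable.tsum_eq_zero_add hsuml]
    simp only [hsymm_zero] at h2 ⊢
    linarith
  rwa [main] at key

lemma continuous_dde {l : List ℝ} (hl : l ≠ []) : Continuous fun t => dde t l := by
  cases l with
  | nil => exact absurd rfl hl
  | cons y l =>
    cases l with
    | nil =>
      simp only [dde_singleton]
      exact Real.continuous_exp.comp (continuous_id.mul continuous_const)
    | cons z l' =>
      exact continuous_iff_continuousAt.mpr fun t =>
        (hasDerivAt_dde_cons y (l := z :: l') (by simp) t).continuousAt

lemma dde_zero_cons (y : ℝ) {l : List ℝ} (hl : l ≠ []) : dde 0 (y :: l) = 0 := by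
  rw [dde_cons]
  have hlen : l.length ≠ 0 := by simpa using hl
  have h : ∀ m : ℕ,
      (0:ℝ) ^ (l.length + m) / (Nat.factorial (l.length + m)) * hsymm (y :: l) m = 0 := by
    intro m
    rw [zero_pow (by omega)]
    simp
  rw [tsum_congr h, tsum_zero]

lemma dde_conv (y : ℝ) {l : List ℝ} (hl : l ≠ []) (t : ℝ) :
    dde t (y :: l) = Real.exp (t * y) * ∫ u in (0:ℝ)..t, Real.exp (-(u * y)) * dde u l := by
  have hcont : Continuous fun u : ℝ => Real.exp (-(u * y)) * dde u l :=
    (Real.continuous_exp.comp (continuous_id.mul continuous_const).neg).mul (continuous_dde hl)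
  set φ : ℝ → ℝ := fun t => Real.exp (-(t * y)) * dde t (y :: l) -
      ∫ u in (0:ℝ)..t, Real.exp (-(u * y)) * dde u l with hφ
  have hderiv : ∀ t, HasDerivAt φ 0 t := by
    intro t
    have h1 : HasDerivAt (fun t : ℝ => Real.exp (-(t * y))) (-y * Real.exp (-(t * y))) t := by
      have := (Real.hasDerivAt_exp (-(t * y))).comp t (((hasDerivAt_id t).mul_const y).neg)
      exact this.congr_deriv (by ring)
    have h2 := hasDerivAt_dde_cons y hl t
    have h4 : HasDerivAt (fun t => ∫ u in (0:ℝ)..t, Real.exp (-(u * y)) * dde u l)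
        (Real.exp (-(t * y)) * dde t l) t :=
      intervalIntegral.integral_hasDerivAt_right (hcont.intervalIntegrable _ _)
        (hcont.stronglyMeasurableAtFilter _ _) hcont.continuousAt
    have h5 := (h1.mul h2).sub h4
    exact h5.congr_deriv (by ring)
  have hconst := is_const_of_deriv_eq_zero (𝕜 := ℝ)
    (fun x => (hderiv x).differentiableAt) (fun x => (hderiv x).deriv) t 0
  have h0 : φ 0 = 0 := by
    simp [hφ, dde_zero_cons y hl]
  rw [h0, hφ] at hconst
  simp only at hconst
  have key : Real.exp (-(t * y)) * dde t (y :: l)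
      = ∫ u in (0:ℝ)..t, Real.exp (-(u * y)) * dde u l := by linarith
  calc dde t (y :: l) = Real.exp (t * y) * (Real.exp (-(t * y)) * dde t (y :: l)) := by
        rw [← mul_assoc, ← Real.exp_add]
        simp
    _ = _ := by rw [key]

lemma exp_integrableOn {b : ℝ} (hb : 0 < b) (v : ℝ) :
    IntegrableOn (fun t => Real.exp (-(b * t))) (Set.Ioi v) := by
  have := exp_neg_integrableOn_Ioi v hb
  simpa [neg_mul] using this

lemma exp_integral {b : ℝ} (hb : 0 < b) (v : ℝ) :
    ∫ t in Set.Ioi v, Real.exp (-(b * t)) = Real.exp (-(b * v)) / b := by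
  have h := MeasureTheory.integral_comp_mul_left_Ioi (fun x => Real.exp (-x)) v hb
  rw [integral_exp_neg_Ioi] at h
  rw [show (fun t => Real.exp (-(b * t))) = fun t => Real.exp (-(b * t)) from rfl]
  calc ∫ t in Set.Ioi v, Real.exp (-(b * t)) = b⁻¹ • Real.exp (-(b * v)) := h
    _ = Real.exp (-(b * v)) / b := by rw [smul_eq_mul]; ring

lemma laplace_exp {c s : ℝ} (h : c < s) :
    IntegrableOn (fun t : ℝ => Real.exp (-(s * t)) * Real.exp (t * c)) (Set.Ioi 0)
    ∧ ∫ t in Set.Ioi (0:ℝ), Real.exp (-(s * t)) * Real.exp (t * c) = 1 / (s - c) := by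
  have hb : 0 < s - c := by linarith
  have hfun : (fun t : ℝ => Real.exp (-(s * t)) * Real.exp (t * c))
      = fun t : ℝ => Real.exp (-((s - c) * t)) := by
    funext t
    rw [← Real.exp_add]
    ring_nf
  rw [hfun]
  refine ⟨exp_integrableOn hb 0, ?_⟩
  rw [exp_integral hb 0]
  simp


set_option maxHeartbeats 1000000 in
theorem dde_laplace_list : ∀ (l : List ℝ), l ≠ [] → ∀ (α s : ℝ), (∀ z ∈ l, α * z < s) →
    IntegrableOn (fun t : ℝ => Real.exp (-(s * t)) * dde (α * t) l) (Set.Ioi 0)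
    ∧ ∫ t in Set.Ioi (0:ℝ), Real.exp (-(s * t)) * dde (α * t) l
        = α ^ (l.length - 1) / ((l.map (fun z => s - α * z)).prod) := by
  intro l
  induction l with
  | nil => intro h; exact absurd rfl h
  | cons y l ih =>
    intro _ α s hs
    have hys : α * y < s := hs y List.mem_cons_self
    by_cases hl : l = []
    · -- base case : singleton
      subst hl
      have hfun : (fun t : ℝ => Real.exp (-(s * t)) * dde (α * t) [y])
          = fun t : ℝ => Real.exp (-(s * t)) * Real.exp (t * (α * y)) := by
        funext t
        rw [dde_singleton]
        ring_nf
      rw [hfun]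
      obtain ⟨h1, h2⟩ := laplace_exp hys
      refine ⟨h1, ?_⟩
      rw [h2]
      simp
    · -- inductive step
      obtain ⟨hInt, hVal⟩ := ih hl α s (fun z hz => hs z (List.mem_cons_of_mem y hz))
      obtain ⟨j, hj⟩ : ∃ j, l.length = j + 1 := by
        cases l with
        | nil => exact absurd rfl hl
        | cons a l => exact ⟨l.length, rfl⟩
      by_cases hα : α = 0
      · subst hα
        have hfun : (fun t : ℝ => Real.exp (-(s * t)) * dde (0 * t) (y :: l))
            = fun _ : ℝ => 0 := by
          funext t
          rw [zero_mul, dde_zero_cons y hl, mul_zero]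
        rw [hfun]
        refine ⟨integrableOn_zero, ?_⟩
        rw [integral_zero]
        have hlen : (y :: l).length - 1 = j + 1 := by simp [hj]
        rw [hlen, zero_pow (Nat.succ_ne_zero j), zero_div]
      · -- α ≠ 0
        set b : ℝ := s - α * y with hbdef
        have hb : 0 < b := by rw [hbdef]; linarith
        set g : ℝ → ℝ := fun v => dde (α * v) l with hgdef
        have hgcont : Continuous g := (continuous_dde hl).comp (continuous_const.mul continuous_id)
        have hconv : ∀ t : ℝ, dde (α * t) (y :: l)
            = α * ∫ v in (0:ℝ)..t, Real.exp (α * (t - v) * y) * g v := by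
          intro t
          rw [dde_conv y hl (α * t)]
          have h := intervalIntegral.integral_comp_mul_left (a := 0) (b := t)
            (fun u => Real.exp (-(u * y)) * dde u l) hα
          simp only [mul_zero, smul_eq_mul] at h
          have hsub : (∫ u in (0:ℝ)..(α * t), Real.exp (-(u * y)) * dde u l)
              = α * ∫ v in (0:ℝ)..t, Real.exp (-(α * v * y)) * g v := by
            rw [h, ← mul_assoc, mul_inv_cancel₀ hα, one_mul]
          rw [hsub, ← mul_assoc, mul_comm (Real.exp (α * t * y)) α, mul_assoc,
            ← intervalIntegral.integral_const_mul]
          congr 1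
          refine intervalIntegral.integral_congr fun v _ => ?_
          rw [← mul_assoc, ← Real.exp_add]
          ring_nf
        set μ : Measure ℝ := volume.restrict (Set.Ioi 0) with hμ
        set F : ℝ × ℝ → ℝ := fun p =>
          Set.indicator {q : ℝ × ℝ | q.1 < q.2}
            (fun q => α * Real.exp (-(s * q.2)) * Real.exp (α * (q.2 - q.1) * y) * g q.1) p
          with hFdef
        have hc1 : Continuous (fun q : ℝ × ℝ =>
            α * Real.exp (-(s * q.2)) * Real.exp (α * (q.2 - q.1) * y) * g q.1) := by
          refine Continuous.mul (Continuous.mul ?_ ?_) (hgcont.comp continuous_fst)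
          · exact continuous_const.mul
              (Real.continuous_exp.comp (continuous_const.mul continuous_snd).neg)
          · exact Real.continuous_exp.comp
              (((continuous_const.mul (continuous_snd.sub continuous_fst)).mul continuous_const))
        have hFmeas : AEStronglyMeasurable F (μ.prod μ) := by
          refine (Measurable.indicator hc1.measurable ?_).aestronglyMeasurable
          exact measurableSet_lt measurable_fst measurable_snd
        have keyid : ∀ t v : ℝ, α * Real.exp (-(s * t)) * Real.exp (α * (t - v) * y) * g v
            = (α * g v * Real.exp (-(α * v * y))) * Real.exp (-(b * t)) := by
          intro t v
          have h1 : Real.exp (-(s * t)) * Real.exp (α * (t - v) * y)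
              = Real.exp (-(α * v * y)) * Real.exp (-(b * t)) := by
            rw [← Real.exp_add, ← Real.exp_add, hbdef]
            congr 1
            ring
          calc α * Real.exp (-(s * t)) * Real.exp (α * (t - v) * y) * g v
              = α * (Real.exp (-(s * t)) * Real.exp (α * (t - v) * y)) * g v := by ring
            _ = α * (Real.exp (-(α * v * y)) * Real.exp (-(b * t))) * g v := by rw [h1]
            _ = (α * g v * Real.exp (-(α * v * y))) * Real.exp (-(b * t)) := by ring
        have hFv : ∀ v : ℝ, (fun t => F (v, t)) = Set.indicator (Set.Ioi v)
            (fun t => (α * g v * Real.exp (-(α * v * y))) * Real.exp (-(b * t))) := by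
          intro v
          funext t
          simp only [hFdef, Set.indicator_apply, Set.mem_setOf_eq, Set.mem_Ioi]
          by_cases h : v < t
          · rw [if_pos h, if_pos h, keyid]
          · rw [if_neg h, if_neg h]
        have hIoiInter : ∀ v : ℝ, v ∈ Set.Ioi (0:ℝ) → Set.Ioi v ∩ Set.Ioi (0:ℝ) = Set.Ioi v :=
          fun v hv => Set.inter_eq_left.mpr (fun x hx => Set.mem_Ioi.mpr (lt_trans (Set.mem_Ioi.mp hv) (Set.mem_Ioi.mp hx)))
        have hslice : ∀ v : ℝ, Integrable (fun t => F (v, t)) μ := by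
          intro v
          rw [hFv v]
          exact (((exp_integrableOn hb 0).const_mul _).indicator measurableSet_Ioi)
        have hinner : ∀ v ∈ Set.Ioi (0:ℝ), (∫ t, F (v, t) ∂μ)
            = (α * g v * Real.exp (-(α * v * y))) * (Real.exp (-(b * v)) / b) := by
          intro v hv
          rw [hFv v, integral_indicator measurableSet_Ioi, hμ,
            Measure.restrict_restrict measurableSet_Ioi, hIoiInter v hv,
            MeasureTheory.integral_const_mul, exp_integral hb v]
        have hFvnorm : ∀ v : ℝ, (fun t => ‖F (v, t)‖) = Set.indicator (Set.Ioi v)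
            (fun t => |α * g v * Real.exp (-(α * v * y))| * Real.exp (-(b * t))) := by
          intro v
          funext t
          rw [show F (v, t) = _ from congrFun (hFv v) t, norm_indicator_eq_indicator_norm]
          simp only [Set.indicator_apply]
          split_ifs with h
          · rw [Real.norm_eq_abs, abs_mul, Real.abs_exp]
          · rfl
        have hnormint : ∀ v ∈ Set.Ioi (0:ℝ), (∫ t, ‖F (v, t)‖ ∂μ)
            = (|α| / b) * |Real.exp (-(s * v)) * dde (α * v) l| := by
          intro v hv
          rw [hFvnorm v, integral_indicator measurableSet_Ioi, hμ,
            Measure.restrict_restrict measurableSet_Ioi, hIoiInter v hv,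
            MeasureTheory.integral_const_mul, exp_integral hb v]
          have he : Real.exp (-(α * v * y)) * Real.exp (-(b * v)) = Real.exp (-(s * v)) := by
            rw [← Real.exp_add, hbdef]
            congr 1
            ring
          calc |α * g v * Real.exp (-(α * v * y))| * (Real.exp (-(b * v)) / b)
              = |α| * |g v| * Real.exp (-(α * v * y))
                * (Real.exp (-(b * v)) / b) := by
                rw [abs_mul, abs_mul, Real.abs_exp]
            _ = |α| * |g v| * (Real.exp (-(α * v * y)) * Real.exp (-(b * v))) / b := by ring
            _ = |α| * |g v| * Real.exp (-(s * v)) / b := by rw [he]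
            _ = (|α| / b) * |Real.exp (-(s * v)) * dde (α * v) l| := by
                rw [abs_mul, Real.abs_exp, hgdef]
                ring
        have hGint : Integrable (fun v => (|α| / b) * |Real.exp (-(s * v)) * dde (α * v) l|) μ := by
          have h1 : Integrable (fun v => ‖Real.exp (-(s * v)) * dde (α * v) l‖) μ := hInt.norm
          simpa only [Real.norm_eq_abs] using h1.const_mul (|α| / b)
        have hFint : Integrable F (μ.prod μ) := by
          rw [integrable_prod_iff hFmeas]
          refine ⟨Filter.Eventually.of_forall hslice, ?_⟩
          refine hGint.congr ?_
          exact (ae_restrict_iff' measurableSet_Ioi).mpr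
            (Filter.Eventually.of_forall fun v hv => (hnormint v hv).symm)
        have hmarg : ∀ t ∈ Set.Ioi (0:ℝ), (∫ v, F (v, t) ∂μ)
            = Real.exp (-(s * t)) * dde (α * t) (y :: l) := by
          intro t ht
          have hFt : (fun v => F (v, t)) = Set.indicator (Set.Iio t)
              (fun v => α * Real.exp (-(s * t)) * Real.exp (α * (t - v) * y) * g v) := by
            funext v
            simp only [hFdef, Set.indicator_apply, Set.mem_setOf_eq, Set.mem_Iio]
          rw [hFt, integral_indicator measurableSet_Iio, hμ,
            Measure.restrict_restrict measurableSet_Iio, Set.Iio_inter_Ioi,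
            ← integral_Ioc_eq_integral_Ioo, ← intervalIntegral.integral_of_le (le_of_lt ht),
            hconv t]
          conv_rhs => rw [← mul_assoc, ← intervalIntegral.integral_const_mul]
          refine intervalIntegral.integral_congr fun v _ => ?_
          ring
        have hmargFun : (fun t => ∫ v, F (v, t) ∂μ) =ᵐ[μ]
            (fun t : ℝ => Real.exp (-(s * t)) * dde (α * t) (y :: l)) := by
          exact (ae_restrict_iff' measurableSet_Ioi).mpr (Filter.Eventually.of_forall hmarg)
        have hIntGoal : IntegrableOn (fun t : ℝ => Real.exp (-(s * t)) * dde (α * t) (y :: l))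
            (Set.Ioi 0) := by
          have h1 : Integrable (fun t => ∫ v, F (v, t) ∂μ) μ := hFint.integral_prod_right
          exact h1.congr hmargFun
        refine ⟨hIntGoal, ?_⟩
        have hswap : ∫ t, (∫ v, F (v, t) ∂μ) ∂μ = ∫ v, (∫ t, F (v, t) ∂μ) ∂μ :=
          (integral_integral_swap (f := fun v t => F (v, t)) hFint).symm
        have hP : 0 < ((l.map (fun z => s - α * z)).prod) := by
          refine List.prod_pos ?_
          intro x hx
          simp only [List.mem_map] at hx
          obtain ⟨z, hz, rfl⟩ := hx
          linarith [hs z (List.mem_cons_of_mem y hz)]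
        calc ∫ t in Set.Ioi (0:ℝ), Real.exp (-(s * t)) * dde (α * t) (y :: l)
            = ∫ t, (∫ v, F (v, t) ∂μ) ∂μ := (integral_congr_ae hmargFun).symm
          _ = ∫ v, (∫ t, F (v, t) ∂μ) ∂μ := hswap
          _ = ∫ v, (α / b) * (Real.exp (-(s * v)) * dde (α * v) l) ∂μ := by
              refine integral_congr_ae ?_
              refine (ae_restrict_iff' measurableSet_Ioi).mpr
                (Filter.Eventually.of_forall fun v hv => ?_)
              show (∫ t, F (v, t) ∂μ) = (α / b) * (Real.exp (-(s * v)) * dde (α * v) l)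
              rw [hinner v hv]
              have he : Real.exp (-(α * v * y)) * Real.exp (-(b * v)) = Real.exp (-(s * v)) := by
                rw [← Real.exp_add, hbdef]
                congr 1
                ring
              calc (α * g v * Real.exp (-(α * v * y))) * (Real.exp (-(b * v)) / b)
                  = (α * g v) * (Real.exp (-(α * v * y)) * Real.exp (-(b * v))) / b := by ring
                _ = (α * g v) * Real.exp (-(s * v)) / b := by rw [he]
                _ = (α / b) * (Real.exp (-(s * v)) * dde (α * v) l) := by rw [hgdef]; ring
          _ = (α / b) * ∫ v, Real.exp (-(s * v)) * dde (α * v) l ∂μ := MeasureTheory.integral_const_mul _ _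
          _ = (α / b) * (α ^ (l.length - 1) / ((l.map (fun z => s - α * z)).prod)) := by rw [hVal]
          _ = α ^ ((y :: l).length - 1) / (((y :: l).map (fun z => s - α * z)).prod) := by
              simp only [List.length_cons, List.map_cons, List.prod_cons, hj,
                Nat.add_sub_cancel]
              rw [hbdef]
              field_simp
              ring

lemma list_prod_range (h : ℕ → ℝ) (n : ℕ) :
    ((List.range n).map h).prod = ∏ j ∈ Finset.range n, h j := by
  induction n with
  | zero => simp
  | succ n ih =>
    rw [List.range_succ, List.map_append, List.prod_append, Finset.prod_range_succ, ih]
    simp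

open MeasureTheory in
/-- **Laplace transform of the DDE**. -/
theorem dde_laplace (q : ℕ) (x : ℕ → ℝ) (α s : ℝ) (hs : ∀ j ≤ q, α * x j < s) :
    IntegrableOn (fun t : ℝ => Real.exp (-(s * t)) * dde (α * t) (seg x 0 q)) (Set.Ioi 0)
      ∧ ∫ t in Set.Ioi (0:ℝ), Real.exp (-(s * t)) * dde (α * t) (seg x 0 q)
          = α ^ q / ∏ j ∈ Finset.range (q + 1), (s - α * x j) := by
  have hl : seg x 0 q ≠ [] := by
    unfold seg
    simp
  have hz : ∀ z ∈ seg x 0 q, α * z < s := by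
    intro z hzz
    unfold seg at hzz
    simp only [List.mem_map, List.mem_range, Nat.sub_zero] at hzz
    obtain ⟨i, hi, rfl⟩ := hzz
    exact hs (0 + i) (by omega)
  obtain ⟨h1, h2⟩ := dde_laplace_list (seg x 0 q) hl α s hz
  refine ⟨h1, ?_⟩
  rw [h2]
  have hlen : (seg x 0 q).length = q + 1 := by
    unfold seg
    simp
  rw [hlen]
  simp only [Nat.add_sub_cancel]
  congr 1
  unfold seg
  rw [List.map_map, Nat.sub_zero, list_prod_range]
  exact Finset.prod_congr rfl fun j _ => by simp
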